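/- Let (a_i)_{1≤i≤m} be i.i.d. standard Gaussian random variables and let λ₁, …, λ_m ∈ (0, 1/4] and C > 0. If C λ_i < 1/(4λ_i) for each i — in particular if the λ_i are small enough that Cλ_i ≤ 1/(8λ_i), say — then E[exp(−(C/2)∑_i |a_i|/√λ_i + C ∑_i λ_i a_i²)] ≤ C' ∏_{i=1}^m λ_i^{1/2} for a constant C' depending only on m and C. -/

import Mathlib

open MeasureTheory ProbabilityTheory


lemma aux_lintegral_prod {Ω : Type} [MeasurableSpace Ω] (P : Measure Ω) [IsProbabilityMeasure P]
    {m : ℕ} (h : Fin m → Ω → ENNReal) (hmeas : ∀ i, Measurable (h i))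
    (hind : iIndepFun h P) (s : Finset (Fin m)) :
    ∫⁻ ω, ∏ i ∈ s, h i ω ∂P = ∏ i ∈ s, ∫⁻ ω, h i ω ∂P := by
  classical
  induction s using Finset.induction_on with
  | empty => simp
  | @insert i s hi ih =>
    rw [Finset.prod_insert hi, ← ih]
    have hIndep : IndepFun (h i) (fun ω => ∏ j ∈ s, h j ω) P := by
      have := (hind.indepFun_finset_prod_of_notMem hmeas hi).symm
      have heq : (∏ j ∈ s, h j) = (fun ω => ∏ j ∈ s, h j ω) := by
        ext ω; simp [Finset.prod_apply]
      rwa [heq] at this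
    have hmp : Measurable (fun ω => ∏ j ∈ s, h j ω) :=
      Finset.measurable_prod s fun j _ => hmeas j
    have := lintegral_mul_eq_lintegral_mul_lintegral_of_indepFun''
      (hmeas i).aemeasurable hmp.aemeasurable hIndep
    rw [← this]
    congr 1
    ext ω
    exact Finset.prod_insert hi


lemma aux_single (C : ℝ) (hC : 0 < C) (lam : ℝ) (h0 : 0 < lam) :
    (∫⁻ x, ENNReal.ofReal (Real.exp (-(C / 2) * (|x| / Real.sqrt lam) + C * (lam * x ^ 2)))
        ∂(gaussianReal 0 1)).toReal ≤ (2 / C) * Real.sqrt lam := by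
  set s := Real.sqrt lam with hs
  have hs0 : 0 < s := Real.sqrt_pos.mpr h0
  set α : ℝ := C / (2 * s) with hα
  have hα0 : 0 < α := by positivity
  set g : ℝ → ℝ := fun x => Real.exp (-(C / 2) * (|x| / s) + C * (lam * x ^ 2)) with hg
  have hgc : Continuous g := by
    apply Real.continuous_exp.comp
    continuity
  have hgnn : ∀ x, 0 ≤ g x := fun x => Real.exp_nonneg _
  have hgmeas : Measurable fun x => ENNReal.ofReal (g x) :=
    ENNReal.measurable_ofReal.comp hgc.measurable
  have hpdf : ∀ x : ℝ, gaussianPDFReal 0 1 x * g x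
      = (Real.sqrt (2 * Real.pi))⁻¹ * Real.exp (-(α * |x|) + (C * lam - 1 / 2) * x ^ 2) := by
    intro x
    rw [gaussianPDFReal]
    push_cast
    rw [mul_assoc, ← Real.exp_add]
    have h1 : -(x - 0) ^ 2 / (2 * 1) + (-(C / 2) * (|x| / s) + C * (lam * x ^ 2))
        = -(α * |x|) + (C * lam - 1 / 2) * x ^ 2 := by
      rw [hα]; field_simp; ring
    rw [h1, mul_one]
  have hpgmeas : Measurable fun x => ENNReal.ofReal (gaussianPDFReal 0 1 x * g x) :=
    ENNReal.measurable_ofReal.comp ((measurable_gaussianPDFReal 0 1).mul hgc.measurable)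
  have hrw : (∫⁻ x, ENNReal.ofReal (g x) ∂(gaussianReal 0 1))
      = ∫⁻ x, ENNReal.ofReal (gaussianPDFReal 0 1 x * g x) := by
    rw [gaussianReal_of_var_ne_zero _ one_ne_zero,
      lintegral_withDensity_eq_lintegral_mul _ (measurable_gaussianPDF 0 1) hgmeas]
    congr 1
    ext x
    simp only [Pi.mul_apply, gaussianPDF]
    rw [← ENNReal.ofReal_mul (gaussianPDFReal_nonneg 0 1 x)]
  rw [hrw]
  have hsqrt2pi : (2 : ℝ) ≤ Real.sqrt (2 * Real.pi) := by
    have h4 : (2:ℝ) * 2 ≤ 2 * Real.pi := by nlinarith [Real.pi_gt_three]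
    nlinarith [Real.sq_sqrt (by positivity : (0:ℝ) ≤ 2 * Real.pi),
      Real.sqrt_nonneg (2 * Real.pi)]
  by_cases hcase : C * lam ≤ 1 / 2
  · -- bounded case
    have hptwise : ∀ x : ℝ, gaussianPDFReal 0 1 x * g x ≤ (1 / 2) * Real.exp (-(α * |x|)) := by
      intro x
      rw [hpdf x]
      have h2 : Real.exp (-(α * |x|) + (C * lam - 1 / 2) * x ^ 2) ≤ Real.exp (-(α * |x|)) := by
        apply Real.exp_le_exp.mpr
        nlinarith [sq_nonneg x]
      have h3 : (Real.sqrt (2 * Real.pi))⁻¹ ≤ 1 / 2 := by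
        rw [show (1:ℝ)/2 = (2:ℝ)⁻¹ by norm_num]
        exact inv_anti₀ (by norm_num) hsqrt2pi
      exact mul_le_mul h3 h2 (Real.exp_nonneg _) (by norm_num)
    have hInt : Integrable (fun x : ℝ => Real.exp (-(α * |x|))) := by
      have hloc : LocallyIntegrable (fun x : ℝ => Real.exp (-(α * |x|))) volume :=
        Continuous.locallyIntegrable (by continuity)
      apply hloc.integrable_of_isBigO_atTop_of_norm_isNegInvariant
        (g := fun x => Real.exp (-α * x))
      · apply Filter.Eventually.of_forall
        intro x
        simp [Function.comp, abs_neg]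
      · apply Filter.EventuallyEq.isBigO
        filter_upwards [Filter.eventually_ge_atTop (0:ℝ)] with x hx
        rw [abs_of_nonneg hx]
        ring_nf
      · exact ⟨Set.Ioi 0, Filter.Ioi_mem_atTop 0, exp_neg_integrableOn_Ioi 0 hα0⟩
    have hval : (∫ x : ℝ, Real.exp (-(α * |x|))) = α⁻¹ * 2 := by
      rw [show (fun x : ℝ => Real.exp (-(α * |x|)))
          = (fun x : ℝ => (fun y : ℝ => Real.exp (-(α * y))) |x|) from rfl,
        integral_comp_abs (f := fun y : ℝ => Real.exp (-(α * y)))]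
      have h5 : (∫ x in Set.Ioi (0:ℝ), Real.exp (-(α * x)))
          = α⁻¹ * ∫ x in Set.Ioi (0:ℝ), Real.exp (-x) := by
        have h6 := integral_comp_mul_left_Ioi (fun y : ℝ => Real.exp (-y)) 0 hα0
        simp only [mul_zero, smul_eq_mul] at h6
        exact h6
      rw [h5, integral_exp_neg_Ioi_zero]
      ring
    have hle : (∫⁻ x, ENNReal.ofReal (gaussianPDFReal 0 1 x * g x))
        ≤ ENNReal.ofReal ((2 / C) * s) := by
      calc (∫⁻ x, ENNReal.ofReal (gaussianPDFReal 0 1 x * g x))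
          ≤ ∫⁻ x, ENNReal.ofReal ((1 / 2) * Real.exp (-(α * |x|))) :=
            lintegral_mono fun x => ENNReal.ofReal_le_ofReal (hptwise x)
        _ = ENNReal.ofReal (∫ x : ℝ, (1 / 2) * Real.exp (-(α * |x|))) :=
            (ofReal_integral_eq_lintegral_ofReal (hInt.const_mul _)
              (Filter.Eventually.of_forall fun x => by positivity)).symm
        _ = ENNReal.ofReal ((2 / C) * s) := by
            rw [integral_const_mul, hval, hα]
            congr 1
            field_simp
    refine le_trans (ENNReal.toReal_mono (by simp) hle) ?_
    rw [ENNReal.toReal_ofReal (by positivity)]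
  · -- divergent case
    push_neg at hcase
    have hb : 0 < C * lam - 1 / 2 := by linarith
    set x₀ : ℝ := max 1 (α / (C * lam - 1 / 2)) with hx₀
    have hx₀pos : 0 < x₀ := lt_of_lt_of_le one_pos (le_max_left _ _)
    have hdiv : (∫⁻ x, ENNReal.ofReal (gaussianPDFReal 0 1 x * g x)) = ⊤ := by
      rw [eq_top_iff]
      calc (⊤ : ENNReal) = ENNReal.ofReal ((Real.sqrt (2 * Real.pi))⁻¹) * volume (Set.Ici x₀) := by
            rw [Real.volume_Ici, ENNReal.mul_top]
            simp only [ne_eq, ENNReal.ofReal_eq_zero, not_le]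
            positivity
        _ = ∫⁻ _ in Set.Ici x₀, ENNReal.ofReal ((Real.sqrt (2 * Real.pi))⁻¹) := by
            rw [setLIntegral_const, mul_comm]
        _ ≤ ∫⁻ x in Set.Ici x₀, ENNReal.ofReal (gaussianPDFReal 0 1 x * g x) := by
            apply setLIntegral_mono hpgmeas
            intro x hx
            apply ENNReal.ofReal_le_ofReal
            rw [hpdf x]
            have hx1 : (1:ℝ) ≤ x := le_trans (le_max_left _ _) hx
            have hxx : α / (C * lam - 1/2) ≤ x := le_trans (le_max_right _ _) hx
            have habs : |x| = x := abs_of_nonneg (by linarith)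
            have hexp : (0:ℝ) ≤ -(α * |x|) + (C * lam - 1 / 2) * x ^ 2 := by
              rw [habs]
              rw [div_le_iff₀ hb] at hxx
              nlinarith
            have h7 := mul_le_mul_of_nonneg_left (Real.one_le_exp hexp)
              (by positivity : (0:ℝ) ≤ (Real.sqrt (2 * Real.pi))⁻¹)
            simpa using h7
        _ ≤ ∫⁻ x, ENNReal.ofReal (gaussianPDFReal 0 1 x * g x) := setLIntegral_le_lintegral _ _
    rw [hdiv]
    simp only [ENNReal.toReal_top]
    positivity


/-- For i.i.d. standard Gaussians `(a_i)_{1≤i≤m}`, `λ_i ∈ (0, 1/4]` and `C > 0` with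
`C λ_i < 1/(4λ_i)` for each `i`, one has
`E[exp(−(C/2) ∑ |a_i|/√λ_i + C ∑ λ_i a_i²)] ≤ C' ∏ λ_i^{1/2}` for a constant `C'`
depending only on `m` and `C`. -/
theorem gaussian_product_expectation_bound (m : ℕ) (C : ℝ) (hC : 0 < C) :
    ∃ C' : ℝ, 0 < C' ∧
      ∀ (Ω : Type) [MeasurableSpace Ω] (P : Measure Ω) [IsProbabilityMeasure P]
        (a : Fin m → Ω → ℝ),
        (∀ i, Measurable (a i)) →
        iIndepFun a P →
        (∀ i, Measure.map (a i) P = gaussianReal 0 1) →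
        ∀ lam : Fin m → ℝ, (∀ i, lam i ∈ Set.Ioc (0 : ℝ) (1 / 4)) →
          (∀ i, C * lam i < 1 / (4 * lam i)) →
          (∫ ω, Real.exp (-(C / 2) * ∑ i, |a i ω| / Real.sqrt (lam i)
              + C * ∑ i, lam i * (a i ω) ^ 2) ∂P)
            ≤ C' * ∏ i, Real.sqrt (lam i) := by
  refine ⟨(2 / C) ^ m, by positivity, ?_⟩
  intro Ω _ P _ a ha hindep hmap lam hlam _
  set G : Fin m → ℝ → ℝ :=
    fun i x => Real.exp (-(C / 2) * (|x| / Real.sqrt (lam i)) + C * (lam i * x ^ 2)) with hG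
  have hGc : ∀ i, Continuous (G i) := by
    intro i
    apply Real.continuous_exp.comp
    continuity
  have hGE : ∀ i, Measurable fun x => ENNReal.ofReal (G i x) :=
    fun i => ENNReal.measurable_ofReal.comp (hGc i).measurable
  have hsum : ∀ ω, -(C / 2) * ∑ i, |a i ω| / Real.sqrt (lam i)
      + C * ∑ i, lam i * (a i ω) ^ 2
      = ∑ i, (-(C / 2) * (|a i ω| / Real.sqrt (lam i)) + C * (lam i * (a i ω) ^ 2)) := by
    intro ω
    rw [Finset.mul_sum, Finset.mul_sum, ← Finset.sum_add_distrib]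
  have hmeasInner : Measurable fun ω => -(C / 2) * ∑ i, |a i ω| / Real.sqrt (lam i)
      + C * ∑ i, lam i * (a i ω) ^ 2 := by
    apply Measurable.add
    · exact (Finset.measurable_sum _ fun i _ => ((ha i).abs.div_const _)).const_mul _
    · exact (Finset.measurable_sum _ fun i _ => ((ha i).pow_const 2).const_mul _).const_mul _
  rw [integral_eq_lintegral_of_nonneg_ae (ae_of_all _ fun ω => Real.exp_nonneg _)
    (Real.measurable_exp.comp hmeasInner).aestronglyMeasurable]
  have hEq : ∀ ω, ENNReal.ofReal (Real.exp (-(C / 2) * ∑ i, |a i ω| / Real.sqrt (lam i)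
      + C * ∑ i, lam i * (a i ω) ^ 2)) = ∏ i, ENNReal.ofReal (G i (a i ω)) := by
    intro ω
    rw [hsum ω, Real.exp_sum, ENNReal.ofReal_prod_of_nonneg fun i _ => Real.exp_nonneg _]
  simp only [hEq]
  have hindep' : iIndepFun
      (fun i ω => ENNReal.ofReal (G i (a i ω))) P := by
    have := hindep.comp (fun i x => ENNReal.ofReal (G i x)) hGE
    exact this
  rw [aux_lintegral_prod P (fun i ω => ENNReal.ofReal (G i (a i ω)))
    (fun i => (hGE i).comp (ha i)) hindep' Finset.univ]
  have hfac : ∀ i, (∫⁻ ω, ENNReal.ofReal (G i (a i ω)) ∂P)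
      = ∫⁻ x, ENNReal.ofReal (G i x) ∂(gaussianReal 0 1) := by
    intro i
    rw [← hmap i, lintegral_map (hGE i) (ha i)]
  rw [ENNReal.toReal_prod]
  calc (∏ i, (∫⁻ ω, ENNReal.ofReal (G i (a i ω)) ∂P).toReal)
      ≤ ∏ i, (2 / C) * Real.sqrt (lam i) := by
        apply Finset.prod_le_prod (fun i _ => ENNReal.toReal_nonneg)
        intro i _
        rw [hfac i]
        exact aux_single C hC (lam i) (hlam i).1
    _ = (2 / C) ^ m * ∏ i, Real.sqrt (lam i) := by
        rw [Finset.prod_mul_distrib, Finset.prod_const, Finset.card_univ, Fintype.card_fin]
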